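/- Let F : 2^V → ℝ be a set function, and define F^r(R) = F(V \ R). If −F has submodularity ratio γ_f and curvature α_f, then F^r has submodularity ratio γ_r = 1 − α_f and curvature α_r = 1 − γ_f. -/
import Mathlib

/-- `γ` satisfies the submodularity-ratio inequalities for `g`. -/
def SubmodIneq {V : Type*} [DecidableEq V] [Fintype V] (g : Finset V → ℝ) (γ : ℝ) : Prop :=
  ∀ (S U : Finset V) (v : V), v ∉ S ∪ U →
    γ * (g (insert v (S ∪ U)) - g (S ∪ U)) ≤ g (insert v S) - g S

/-- `α` satisfies the curvature inequalities for `g`. -/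
def CurvIneq {V : Type*} [DecidableEq V] [Fintype V] (g : Finset V → ℝ) (α : ℝ) : Prop :=
  ∀ (S U : Finset V) (v : V), v ∉ S ∪ U →
    g (insert v (S ∪ U)) - g (S ∪ U) ≥ (1 - α) * (g (insert v S) - g S)

lemma lemma1 {V : Type*} [DecidableEq V] [Fintype V] (F : Finset V → ℝ) (γ : ℝ) :
    SubmodIneq (fun R => F Rᶜ) γ ↔ CurvIneq (fun S => -F S) (1 - γ) := by
  constructor
  · intro h A B v hv
    have hvA : v ∉ A := fun hA => hv (Finset.mem_union_left _ hA)
    set S : Finset V := (insert v (A ∪ B))ᶜ with hS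
    set U : Finset V := (insert v A)ᶜ with hU
    have hSU : S ∪ U = U := by
      apply Finset.union_eq_right.mpr
      exact Finset.compl_subset_compl.mpr
        (Finset.insert_subset_insert _ Finset.subset_union_left)
    have hvSU : v ∉ S ∪ U := by
      rw [hSU]
      simp [hU]
    have := h S U v hvSU
    simp only [hSU] at this
    have e1 : (insert v U)ᶜ = A := by
      rw [hU, Finset.compl_insert, compl_compl, Finset.erase_insert hvA]
    have e2 : Uᶜ = insert v A := by rw [hU, compl_compl]
    have e3 : (insert v S)ᶜ = A ∪ B := by
      rw [hS, Finset.compl_insert, compl_compl, Finset.erase_insert hv]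
    have e4 : Sᶜ = insert v (A ∪ B) := by rw [hS, compl_compl]
    rw [e1, e2, e3, e4] at this
    simp only []
    ring_nf at this ⊢
    linarith
  · intro h S U v hv
    have hvS : v ∉ S := fun hS => hv (Finset.mem_union_left _ hS)
    set A : Finset V := (S ∪ U)ᶜ.erase v with hA
    set B : Finset V := Sᶜ.erase v with hB
    have hAB : A ∪ B = B := by
      apply Finset.union_eq_right.mpr
      exact Finset.erase_subset_erase _ (Finset.compl_subset_compl.mpr Finset.subset_union_left)
    have hvAB : v ∉ A ∪ B := by rw [hAB]; exact Finset.notMem_erase _ _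
    have := h A B v hvAB
    simp only [hAB] at this
    rw [hB, Finset.insert_erase (Finset.mem_compl.mpr hvS),
      hA, Finset.insert_erase (Finset.mem_compl.mpr hv)] at this
    simp only [Finset.compl_insert]
    ring_nf at this ⊢
    linarith

lemma lemma2 {V : Type*} [DecidableEq V] [Fintype V] (F : Finset V → ℝ) (α : ℝ) :
    CurvIneq (fun R => F Rᶜ) α ↔ SubmodIneq (fun S => -F S) (1 - α) := by
  constructor
  · intro h A B v hv
    have hvA : v ∉ A := fun hA => hv (Finset.mem_union_left _ hA)
    set S : Finset V := (insert v (A ∪ B))ᶜ with hS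
    set U : Finset V := (insert v A)ᶜ with hU
    have hSU : S ∪ U = U := by
      apply Finset.union_eq_right.mpr
      exact Finset.compl_subset_compl.mpr
        (Finset.insert_subset_insert _ Finset.subset_union_left)
    have hvSU : v ∉ S ∪ U := by rw [hSU]; simp [hU]
    have := h S U v hvSU
    simp only [hSU] at this
    have e1 : (insert v U)ᶜ = A := by
      rw [hU, Finset.compl_insert, compl_compl, Finset.erase_insert hvA]
    have e2 : Uᶜ = insert v A := by rw [hU, compl_compl]
    have e3 : (insert v S)ᶜ = A ∪ B := by
      rw [hS, Finset.compl_insert, compl_compl, Finset.erase_insert hv]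
    have e4 : Sᶜ = insert v (A ∪ B) := by rw [hS, compl_compl]
    rw [e1, e2, e3, e4] at this
    simp only []
    ring_nf at this ⊢
    linarith
  · intro h S U v hv
    have hvS : v ∉ S := fun hS => hv (Finset.mem_union_left _ hS)
    set A : Finset V := (S ∪ U)ᶜ.erase v with hA
    set B : Finset V := Sᶜ.erase v with hB
    have hAB : A ∪ B = B := by
      apply Finset.union_eq_right.mpr
      exact Finset.erase_subset_erase _ (Finset.compl_subset_compl.mpr Finset.subset_union_left)
    have hvAB : v ∉ A ∪ B := by rw [hAB]; exact Finset.notMem_erase _ _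
    have := h A B v hvAB
    simp only [hAB] at this
    rw [hB, Finset.insert_erase (Finset.mem_compl.mpr hvS),
      hA, Finset.insert_erase (Finset.mem_compl.mpr hv)] at this
    simp only [Finset.compl_insert]
    ring_nf at this ⊢
    linarith

/-- If `-F` has submodularity ratio `γf` and curvature `αf`, then `F^r(R) = F(V \ R)`
has submodularity ratio `1 - αf` and curvature `1 - γf`. -/
theorem reverse_submodularityRatio_curvature
    {V : Type*} [DecidableEq V] [Fintype V] (F : Finset V → ℝ) (γf αf : ℝ)
    (hincF : ∀ S T : Finset V, S ⊂ T → (-F S) < (-F T))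
    (hincFr : ∀ R₁ R₂ : Finset V, R₁ ⊂ R₂ → F R₁ᶜ < F R₂ᶜ)
    (hγf : IsGreatest {γ : ℝ | SubmodIneq (fun S => -F S) γ} γf)
    (hαf : IsLeast {α : ℝ | CurvIneq (fun S => -F S) α} αf) :
    IsGreatest {γ : ℝ | SubmodIneq (fun R => F Rᶜ) γ} (1 - αf) ∧
    IsLeast {α : ℝ | CurvIneq (fun R => F Rᶜ) α} (1 - γf) := by
  constructor
  · constructor
    · show SubmodIneq (fun R => F Rᶜ) (1 - αf)
      rw [lemma1]
      have : (1 - (1 - αf)) = αf := by ring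
      rw [this]
      exact hαf.1
    · intro γ hγ
      have : CurvIneq (fun S => -F S) (1 - γ) := (lemma1 F γ).mp hγ
      have := hαf.2 this
      linarith
  · constructor
    · show CurvIneq (fun R => F Rᶜ) (1 - γf)
      rw [lemma2]
      have : (1 - (1 - γf)) = γf := by ring
      rw [this]
      exact hγf.1
    · intro α hα
      have : SubmodIneq (fun S => -F S) (1 - α) := (lemma2 F α).mp hα
      have := hγf.2 this
      linarith
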